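/- Let G be a directed cactus graph on n vertices. Then for any two vertices i and j, there is a unique directed path from i to j. -/

import Mathlib

open Matrix Finset

/-- Out-degree of vertex `i` in the digraph with adjacency `A`. -/
def outdeg {n : ℕ} (A : Fin n → Fin n → Bool) (i : Fin n) : ℕ :=
  (Finset.univ.filter (fun j => A i j = true)).card

/-- In-degree of vertex `i`. -/
def indeg {n : ℕ} (A : Fin n → Fin n → Bool) (i : Fin n) : ℕ :=
  (Finset.univ.filter (fun j => A j i = true)).card

/-- Laplacian matrix of a digraph: diagonal = out-degree, `-1` on edges, `0` otherwise. -/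
def lap {n : ℕ} (A : Fin n → Fin n → Bool) : Matrix (Fin n) (Fin n) ℝ :=
  Matrix.of fun i j => if i = j then (outdeg A i : ℝ) else if A i j then -1 else 0

/-- Reachability by directed edges. -/
def Reach {n : ℕ} (A : Fin n → Fin n → Bool) : Fin n → Fin n → Prop :=
  Relation.ReflTransGen (fun a b => A a b = true)

def StronglyConnected {n : ℕ} (A : Fin n → Fin n → Bool) : Prop := ∀ i j, Reach A i j

def IsBalanced {n : ℕ} (A : Fin n → Fin n → Bool) : Prop := ∀ i, indeg A i = outdeg A i

/-- In-degree of `v` in an edge set `T`. -/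
def tIndeg {n : ℕ} (T : Finset (Fin n × Fin n)) (v : Fin n) : ℕ :=
  (T.filter (fun e => e.2 = v)).card

/-- Reachability using only the edges of `T`. -/
def ReachIn {n : ℕ} (T : Finset (Fin n × Fin n)) : Fin n → Fin n → Prop :=
  Relation.ReflTransGen (fun a b => (a, b) ∈ T)

/-- Spanning tree of the digraph rooted at `i` (spanning arborescence, edges directed
away from `i`): every vertex other than `i` has in-degree 1, `i` has in-degree 0, and
every vertex is reachable from `i` (i.e. the subgraph is connected and acyclic). -/
def IsSpanningTree {n : ℕ} (A : Fin n → Fin n → Bool) (i : Fin n)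
    (T : Finset (Fin n × Fin n)) : Prop :=
  (∀ e ∈ T, A e.1 e.2 = true) ∧ tIndeg T i = 0 ∧
    (∀ v, v ≠ i → tIndeg T v = 1) ∧ (∀ v, ReachIn T i v)

/-- Spanning forest with exactly two trees, rooted at `i` and `j`: two vertex-disjoint
arborescences partitioning the vertex set, with roots `i` and `j`. -/
def IsTwoForest {n : ℕ} (A : Fin n → Fin n → Bool) (i j : Fin n)
    (T : Finset (Fin n × Fin n)) : Prop :=
  (∀ e ∈ T, A e.1 e.2 = true) ∧ tIndeg T i = 0 ∧ tIndeg T j = 0 ∧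
    (∀ v, v ≠ i → v ≠ j → tIndeg T v = 1) ∧ (∀ v, ReachIn T i v ∨ ReachIn T j v)

/-- `det L[{i}ᶜ, {i}ᶜ]`: determinant of the principal submatrix deleting row/column `i`. -/
def minor1 {n : ℕ} (L : Matrix (Fin n) (Fin n) ℝ) (i : Fin n) : ℝ :=
  (L.submatrix (fun a : {x : Fin n // x ≠ i} => (a : Fin n))
    (fun a : {x : Fin n // x ≠ i} => (a : Fin n))).det

/-- `det L[{i,j}ᶜ, {i,j}ᶜ]`: determinant of the principal submatrix deleting rows and
columns `i` and `j`. -/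
def minor2 {n : ℕ} (L : Matrix (Fin n) (Fin n) ℝ) (i j : Fin n) : ℝ :=
  (L.submatrix (fun a : {x : Fin n // x ≠ i ∧ x ≠ j} => (a : Fin n))
    (fun a : {x : Fin n // x ≠ i ∧ x ≠ j} => (a : Fin n))).det

/-- `M` is the Moore–Penrose inverse of `L` (the four Penrose equations). -/
def IsMoorePenrose {n : ℕ} (L M : Matrix (Fin n) (Fin n) ℝ) : Prop :=
  L * M * L = L ∧ M * L * M = M ∧ (L * M)ᵀ = L * M ∧ (M * L)ᵀ = M * L

/-- Resistance `r_{ij} = l†_{ii} + l†_{jj} - 2 l†_{ij}` computed from `M = L†`. -/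
def resist {n : ℕ} (M : Matrix (Fin n) (Fin n) ℝ) (i j : Fin n) : ℝ :=
  M i i + M j j - 2 * M i j

/-- Directed path from `i` to `j`: a list of distinct vertices starting at `i`, ending at
`j`, consecutive ones joined by directed edges. -/
def IsPath {n : ℕ} (A : Fin n → Fin n → Bool) (i j : Fin n) (p : List (Fin n)) : Prop :=
  p.Chain' (fun a b => A a b = true) ∧ p.head? = some i ∧ p.getLast? = some j ∧ p.Nodup

/-- `s` is the edge set of a directed cycle of the digraph: the cyclically consecutive
pairs of a nonempty duplicate-free vertex list, all being directed edges. -/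
def IsCycle {n : ℕ} (A : Fin n → Fin n → Bool) (s : Finset (Fin n × Fin n)) : Prop :=
  ∃ c : List (Fin n), 2 ≤ c.length ∧ c.Nodup ∧
    (∀ p ∈ c.zip (c.rotate 1), A p.1 p.2 = true) ∧ s = (c.zip (c.rotate 1)).toFinset

/-- Vertex set of a cycle given by its edge set. -/
def cycVerts {n : ℕ} (s : Finset (Fin n × Fin n)) : Finset (Fin n) := s.image Prod.fst

/-- Directed cactus: strongly connected and every directed edge lies in exactly one
directed cycle. -/
def IsCactus {n : ℕ} (A : Fin n → Fin n → Bool) : Prop :=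
  StronglyConnected A ∧
    ∀ i j : Fin n, A i j = true → ∃! s : Finset (Fin n × Fin n), IsCycle A s ∧ (i, j) ∈ s

/-- Classical distance: length (number of edges) of a shortest directed path. -/
noncomputable def pdist {n : ℕ} (A : Fin n → Fin n → Bool) (i j : Fin n) : ℕ :=
  sInf {m : ℕ | ∃ p : List (Fin n), IsPath A i j p ∧ p.length = m + 1}

/- ===== auxiliary lemmas for stmt_10 ===== -/

section Aux
variable {α : Type*}

private lemma aux_zip_tail_mem {E : α → α → Prop} :
    ∀ {l : List α}, l.Chain' E → ∀ p ∈ l.zip l.tail, E p.1 p.2 := by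
  intro l
  induction l with
  | nil => intro _ p hp; simp at hp
  | cons a t ih =>
    intro h p hp
    cases t with
    | nil => simp at hp
    | cons b r =>
      simp only [List.tail_cons, List.zip_cons_cons, List.mem_cons] at hp
      rcases hp with rfl | hp
      · exact h.rel_head
      · exact ih h.tail p hp

private lemma aux_zip_concat (x : α) : ∀ (l : List α) (hl : l ≠ []),
    l.zip (l.tail ++ [x]) = l.zip l.tail ++ [(l.getLast hl, x)] := by
  intro l
  induction l with
  | nil => intro h; exact absurd rfl h
  | cons a t ih =>
    intro _
    cases t with
    | nil => simp
    | cons b r =>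
      have h2 := ih (by simp)
      simp only [List.tail_cons] at h2 ⊢
      simp only [List.cons_append, List.zip_cons_cons, h2,
        List.getLast_cons (by simp : (b :: r) ≠ [])]

private lemma aux_zip_rotate (l : List α) (hl : l ≠ []) :
    l.zip (l.rotate 1) = l.zip l.tail ++ [(l.getLast hl, l.head hl)] := by
  cases l with
  | nil => exact absurd rfl hl
  | cons a t =>
    have hrot : (a :: t).rotate 1 = t ++ [a] := by
      simpa using List.rotate_cons_succ t a 0
    rw [hrot]
    have := aux_zip_concat a (a :: t) hl
    simpa using this

private lemma aux_succ_unique {l r : List α} (hn : l.Nodup) {a b b' : α}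
    (h1 : (a, b) ∈ l.zip r) (h2 : (a, b') ∈ l.zip r) : b = b' := by
  rw [List.mem_iff_getElem] at h1 h2
  obtain ⟨k, hk, hk1⟩ := h1
  obtain ⟨k', hk', hk1'⟩ := h2
  rw [List.getElem_zip] at hk1 hk1'
  have ha : l[k]'(lt_of_lt_of_le hk (by simp [List.length_zip])) =
      l[k']'(lt_of_lt_of_le hk' (by simp [List.length_zip])) := by
    have e1 := congrArg Prod.fst hk1
    have e2 := congrArg Prod.fst hk1'
    simp only at e1 e2
    rw [e1, e2]
  have hkk : k = k' := (hn.getElem_inj_iff).1 ha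
  subst hkk
  have e1 := congrArg Prod.snd hk1
  have e2 := congrArg Prod.snd hk1'
  simp only at e1 e2
  rw [← e1, ← e2]

private lemma aux_mem_of_getLast? {l : List α} {a : α} (h : l.getLast? = some a) : a ∈ l := by
  cases l with
  | nil => simp at h
  | cons x t =>
    have hne : x :: t ≠ [] := by simp
    rw [List.getLast?_eq_getLast hne] at h
    have := List.getLast_mem hne
    rwa [Option.some_inj.mp h] at this

private lemma aux_singleton {l : List α} {j : α} (hn : l.Nodup) (hh : l.head? = some j)
    (hl : l.getLast? = some j) : l = [j] := by
  cases l with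
  | nil => simp at hh
  | cons x t =>
    have hx : x = j := by simpa using hh
    subst hx
    cases t with
    | nil => rfl
    | cons b r =>
      exfalso
      rw [List.getLast?_cons_cons] at hl
      have : x ∈ b :: r := aux_mem_of_getLast? hl
      exact (List.nodup_cons.mp hn).1 this

private lemma aux_det (s : Finset (α × α))
    (hfun : ∀ a b b', (a, b) ∈ s → (a, b') ∈ s → b = b') :
    ∀ (l₁ l₂ : List α) (j : α), l₁.Nodup → l₂.Nodup →
      (∀ p ∈ l₁.zip l₁.tail, p ∈ s) → (∀ p ∈ l₂.zip l₂.tail, p ∈ s) →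
      l₁.head? = l₂.head? → l₁.getLast? = some j → l₂.getLast? = some j → l₁ = l₂ := by
  intro l₁
  induction l₁ with
  | nil => intro l₂ j _ _ _ _ _ hlast _; simp at hlast
  | cons x t ih =>
    intro l₂ j hn1 hn2 hm1 hm2 hhead hlast1 hlast2
    cases l₂ with
    | nil => simp at hhead
    | cons x' t' =>
      have hx : x = x' := by simpa using hhead
      subst hx
      cases t with
      | nil =>
        have hxj : x = j := by simpa using hlast1
        subst hxj
        exact (aux_singleton hn2 rfl hlast2).symm
      | cons b r =>
        have hxj : x ≠ j := by
          intro h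
          subst h
          rw [List.getLast?_cons_cons] at hlast1
          exact (List.nodup_cons.mp hn1).1 (aux_mem_of_getLast? hlast1)
        cases t' with
        | nil =>
          exfalso
          exact hxj (by simpa using hlast2)
        | cons b' r' =>
          have hb1 : (x, b) ∈ s := hm1 (x, b) (by simp)
          have hb2 : (x, b') ∈ s := hm2 (x, b') (by simp)
          have hbb : b = b' := hfun x b b' hb1 hb2
          subst hbb
          have htail : b :: r = b :: r' := by
            refine ih (b :: r') j (hn1.of_cons) (hn2.of_cons) ?_ ?_ rfl ?_ ?_
            · intro p hp
              apply hm1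
              simp only [List.tail_cons, List.zip_cons_cons] at hp ⊢
              exact List.mem_cons_of_mem _ hp
            · intro p hp
              apply hm2
              simp only [List.tail_cons, List.zip_cons_cons] at hp ⊢
              exact List.mem_cons_of_mem _ hp
            · rwa [List.getLast?_cons_cons] at hlast1
            · rwa [List.getLast?_cons_cons] at hlast2
          rw [htail]

end Aux

section PathAux

variable {n : ℕ}

private lemma path_ne_nil {A : Fin n → Fin n → Bool} {i j : Fin n} {p : List (Fin n)}
    (hp : IsPath A i j p) : p ≠ [] := by
  intro h; subst h; simp [IsPath] at hp

private lemma path_self {A : Fin n → Fin n → Bool} {i : Fin n} {p : List (Fin n)}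
    (hp : IsPath A i i p) : p = [i] :=
  aux_singleton hp.2.2.2 hp.2.1 hp.2.2.1

private lemma path_concat {A : Fin n → Fin n → Bool} {i j c : Fin n} {p : List (Fin n)}
    (hp : IsPath A i j p) (hjc : A j c = true) (hc : c ∉ p) : IsPath A i c (p ++ [c]) := by
  obtain ⟨hch, hh, hl, hn⟩ := hp
  refine ⟨?_, ?_, List.getLast?_concat, ?_⟩
  · apply List.isChain_append.mpr
    refine ⟨hch, List.isChain_singleton c, ?_⟩
    intro x hx y hy
    rw [hl] at hx
    simp only [Option.mem_def, Option.some_inj, List.head?_cons] at hx hy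
    rw [← hx, ← hy]
    exact hjc
  · rw [List.head?_append_of_ne_nil _ (path_ne_nil ⟨hch, hh, hl, hn⟩), hh]
  · rw [List.nodup_append']
    exact ⟨hn, List.nodup_singleton c, by intro x hx hx2; simp at hx2; subst hx2; exact hc hx⟩

private lemma path_prefix {A : Fin n → Fin n → Bool} {i j y : Fin n} {a b : List (Fin n)}
    (hp : IsPath A i j (a ++ y :: b)) (ha : a ≠ []) : IsPath A i y (a ++ [y]) := by
  obtain ⟨hch, hh, hl, hn⟩ := hp
  have hsplit : a ++ y :: b = (a ++ [y]) ++ b := by simp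
  rw [hsplit] at hch hn
  refine ⟨(List.isChain_append.mp hch).1, ?_, List.getLast?_concat, ?_⟩
  · rw [List.head?_append_of_ne_nil a ha] at hh
    rw [List.head?_append_of_ne_nil a ha, hh]
  · exact (List.nodup_append.mp hn).1

private lemma path_suffix {A : Fin n → Fin n → Bool} {i j y : Fin n} {a b : List (Fin n)}
    (hp : IsPath A i j (a ++ y :: b)) : IsPath A y j (y :: b) := by
  obtain ⟨hch, hh, hl, hn⟩ := hp
  refine ⟨(List.isChain_append.mp hch).2.1, rfl, ?_, (List.nodup_append.mp hn).2.1⟩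
  · rw [List.getLast?_append] at hl
    cases hg : (y :: b).getLast? with
    | none => simp at hg
    | some v => rw [hg] at hl; simpa using hl

private lemma exists_path_of_reach (A : Fin n → Fin n → Bool) {i j : Fin n}
    (h : Reach A i j) : ∃ p, IsPath A i j p := by
  induction h with
  | refl => exact ⟨[i], List.isChain_singleton i, rfl, rfl, List.nodup_singleton i⟩
  | @tail b c hab hbc ih =>
    classical
    obtain ⟨p, hp⟩ := ih
    by_cases hc : c ∈ p
    · obtain ⟨a, b', rfl⟩ := List.append_of_mem hc
      by_cases ha : a = []
      · subst ha
        have : c = i := by simpa using hp.2.1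
        subst this
        exact ⟨[c], List.isChain_singleton c, rfl, rfl, List.nodup_singleton c⟩
      · exact ⟨a ++ [c], path_prefix hp ha⟩
    · exact ⟨p ++ [c], path_concat hp hbc hc⟩

private lemma cycle_of_path {A : Fin n → Fin n → Bool} {y j : Fin n} {p : List (Fin n)}
    (hp : IsPath A y j p) (hyj : y ≠ j) (hjy : A j y = true) :
    IsCycle A ((p.zip (p.rotate 1)).toFinset) ∧
      (j, y) ∈ (p.zip (p.rotate 1)).toFinset ∧
      (∀ q ∈ p.zip p.tail, q ∈ (p.zip (p.rotate 1)).toFinset) := by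
  have hne : p ≠ [] := path_ne_nil hp
  have hhead : p.head hne = y := by
    have := hp.2.1; rw [List.head?_eq_head hne] at this; exact Option.some_inj.mp this
  have hlast : p.getLast hne = j := by
    have := hp.2.2.1; rw [List.getLast?_eq_getLast hne] at this; exact Option.some_inj.mp this
  have hzip := aux_zip_rotate p hne
  have hlen : 2 ≤ p.length := by
    cases p with
    | nil => exact absurd rfl hne
    | cons x t =>
      cases t with
      | nil =>
        exfalso
        apply hyj
        have h1 : x = y := by simpa using hp.2.1
        have h2 : x = j := by simpa using hp.2.2.1
        rw [← h1, h2]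
      | cons b r => simp only [List.length_cons]; omega
  have hedges : ∀ q ∈ p.zip (p.rotate 1), A q.1 q.2 = true := by
    intro q hq
    rw [hzip, List.mem_append] at hq
    rcases hq with hq | hq
    · exact aux_zip_tail_mem hp.1 q hq
    · simp only [List.mem_singleton] at hq
      subst hq
      rw [hhead, hlast]
      exact hjy
  refine ⟨⟨p, hlen, hp.2.2.2, hedges, rfl⟩, ?_, ?_⟩
  · rw [List.mem_toFinset, hzip, List.mem_append]
    right
    simp [hhead, hlast]
  · intro q hq
    rw [List.mem_toFinset, hzip, List.mem_append]
    exact Or.inl hq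

private lemma unique_path_aux (A : Fin n → Fin n → Bool) (hA : ∀ i, A i i = false)
    (hcact : IsCactus A) :
    ∀ m : ℕ, ∀ (i j : Fin n) (R : List (Fin n)), IsPath A j i R → R.length ≤ m →
      ∀ P Q : List (Fin n), IsPath A i j P → IsPath A i j Q → P = Q := by
  intro m
  induction m with
  | zero =>
    intro i j R hR hlen
    exfalso
    have := path_ne_nil hR
    cases R with
    | nil => exact this rfl
    | cons a t => simp at hlen
  | succ m ih =>
    intro i j R hR hlen P Q hP hQ
    classical
    cases R with
    | nil => exact absurd rfl (path_ne_nil hR)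
    | cons x R' =>
      have hxj : x = j := by simpa using hR.2.1
      subst hxj
      cases R' with
      | nil =>
        -- R = [j], so i = j
        have hij : x = i := by simpa using hR.2.2.1
        subst hij
        rw [path_self hP, path_self hQ]
      | cons y rest =>
        -- edge (j, y), and R.tail is a path from y to i of length ≤ m
        have hedge : A x y = true := hR.1.rel_head
        have hRt : IsPath A y i (y :: rest) :=
          ⟨hR.1.tail, rfl, by have := hR.2.2.1; rwa [List.getLast?_cons_cons] at this,
            hR.2.2.2.of_cons⟩
        have hRtlen : (y :: rest).length ≤ m := by
          simp only [List.length_cons] at hlen ⊢; omega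
        have hyj : y ≠ x := by
          intro h; subst h; rw [hA y] at hedge; exact Bool.false_ne_true hedge
        by_cases hyi : y = i
        · -- edge (j, i): P and Q are both cycles through (j, i)
          subst hyi
          obtain ⟨hc1, hm1, hsub1⟩ := cycle_of_path hP hyj hedge
          obtain ⟨hc2, hm2, hsub2⟩ := cycle_of_path hQ hyj hedge
          obtain ⟨s, -, hu⟩ := hcact.2 x y hedge
          have e1 := hu _ ⟨hc1, hm1⟩
          have e2 := hu _ ⟨hc2, hm2⟩
          have hfun : ∀ a b b', (a, b) ∈ (P.zip (P.rotate 1)).toFinset →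
              (a, b') ∈ (P.zip (P.rotate 1)).toFinset → b = b' := by
            intro a b b' h1 h2
            exact aux_succ_unique hP.2.2.2 (List.mem_toFinset.mp h1) (List.mem_toFinset.mp h2)
          refine aux_det _ hfun P Q x hP.2.2.2 hQ.2.2.2 hsub1 ?_ ?_ hP.2.2.1 hQ.2.2.1
          · intro p hp
            have := hsub2 p hp
            rwa [e2, ← e1] at this
          · rw [hP.2.1, hQ.2.1]
        · by_cases hyP : y ∈ P
          · by_cases hyQ : y ∈ Q
            · -- y on both paths: split both
              obtain ⟨a, b, rfl⟩ := List.append_of_mem hyP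
              obtain ⟨a', b', rfl⟩ := List.append_of_mem hyQ
              have hane : a ≠ [] := by
                intro h; subst h; exact hyi (by simpa using hP.2.1)
              have hane' : a' ≠ [] := by
                intro h; subst h; exact hyi (by simpa using hQ.2.1)
              have hpre := ih i y (y :: rest) hRt hRtlen (a ++ [y]) (a' ++ [y])
                (path_prefix hP hane) (path_prefix hQ hane')
              have haa : a = a' := List.append_cancel_right hpre
              have hsufP := path_suffix hP
              have hsufQ := path_suffix hQ
              obtain ⟨hc1, hm1, hsub1⟩ := cycle_of_path hsufP hyj hedge
              obtain ⟨hc2, hm2, hsub2⟩ := cycle_of_path hsufQ hyj hedge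
              obtain ⟨s, -, hu⟩ := hcact.2 x y hedge
              have e1 := hu _ ⟨hc1, hm1⟩
              have e2 := hu _ ⟨hc2, hm2⟩
              have hfun : ∀ c d d',
                  (c, d) ∈ (((y :: b).zip ((y :: b).rotate 1)).toFinset) →
                  (c, d') ∈ (((y :: b).zip ((y :: b).rotate 1)).toFinset) → d = d' := by
                intro c d d' h1 h2
                exact aux_succ_unique hsufP.2.2.2 (List.mem_toFinset.mp h1)
                  (List.mem_toFinset.mp h2)
              have hbb : y :: b = y :: b' := by
                refine aux_det _ hfun (y :: b) (y :: b') x hsufP.2.2.2 hsufQ.2.2.2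
                  hsub1 ?_ rfl hsufP.2.2.1 hsufQ.2.2.1
                intro p hp
                have := hsub2 p hp
                rwa [e2, ← e1] at this
              rw [haa, hbb]
            · -- y ∈ P, y ∉ Q: contradiction
              exfalso
              obtain ⟨a, b, rfl⟩ := List.append_of_mem hyP
              have hane : a ≠ [] := by
                intro h; subst h; exact hyi (by simpa using hP.2.1)
              have hQy : IsPath A i y (Q ++ [y]) := path_concat hQ hedge hyQ
              have heq := ih i y (y :: rest) hRt hRtlen (a ++ [y]) (Q ++ [y])
                (path_prefix hP hane) hQy
              have haQ : a = Q := List.append_cancel_right heq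
              have hja : x ∈ a := by
                rw [haQ]; exact aux_mem_of_getLast? hQ.2.2.1
              have hjb : x ∈ y :: b := aux_mem_of_getLast? (path_suffix hP).2.2.1
              exact (List.nodup_append'.mp hP.2.2.2).2.2 hja hjb
          · by_cases hyQ : y ∈ Q
            · -- symmetric contradiction
              exfalso
              obtain ⟨a, b, rfl⟩ := List.append_of_mem hyQ
              have hane : a ≠ [] := by
                intro h; subst h; exact hyi (by simpa using hQ.2.1)
              have hPy : IsPath A i y (P ++ [y]) := path_concat hP hedge hyP
              have heq := ih i y (y :: rest) hRt hRtlen (P ++ [y]) (a ++ [y])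
                hPy (path_prefix hQ hane)
              have haP : P = a := List.append_cancel_right heq
              have hja : x ∈ a := by
                rw [← haP]; exact aux_mem_of_getLast? hP.2.2.1
              have hjb : x ∈ y :: b := aux_mem_of_getLast? (path_suffix hQ).2.2.1
              exact (List.nodup_append'.mp hQ.2.2.2).2.2 hja hjb
            · -- y on neither: extend both
              have hPy : IsPath A i y (P ++ [y]) := path_concat hP hedge hyP
              have hQy : IsPath A i y (Q ++ [y]) := path_concat hQ hedge hyQ
              exact List.append_cancel_right (ih i y (y :: rest) hRt hRtlen _ _ hPy hQy)

end PathAux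

/-- in a directed cactus the directed path between any two vertices is
unique. -/
theorem stmt_10 {n : ℕ} (A : Fin n → Fin n → Bool) (hA : ∀ i, A i i = false)
    (hcact : IsCactus A) (i j : Fin n) :
    ∃! p : List (Fin n), IsPath A i j p := by
  classical
  obtain ⟨P, hP⟩ := exists_path_of_reach A (hcact.1 i j)
  obtain ⟨R, hR⟩ := exists_path_of_reach A (hcact.1 j i)
  exact ⟨P, hP, fun q hq => unique_path_aux A hA hcact R.length i j R hR le_rfl q P hq hP⟩
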